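/- The upper bound N − 1 is tight: for every N ≥ 1, the chain family F = {{1,…,i} : 0 ≤ i ≤ N−1} of subsets of Fin (N−1) consists of N pairwise distinct sets, and any narrowing set for F must contain at least N − 1 instances; in fact T = Fin (N−1) itself is a minimal narrowing set. -/
import Mathlib


/-- The `i`-th member of the chain family: `{j : j < i}` as a subset of `Fin (N-1)`. -/
def chainFam (N : ℕ) (i : Fin N) : Set (Fin (N - 1)) := {j | (j : ℕ) < (i : ℕ)}

lemma chain_distinguish (N : ℕ) {i j : Fin N} (hij : (i : ℕ) < (j : ℕ)) :
    ∃ x : Fin (N - 1), (x ∈ chainFam N i ↔ x ∉ chainFam N j) := by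
  have hx : (i : ℕ) < N - 1 := lt_of_lt_of_le hij (Nat.le_pred_of_lt j.isLt)
  refine ⟨⟨i, hx⟩, ?_⟩
  simp [chainFam, hij]

/-- The upper bound `N - 1` is tight: the chain family consists of `N` pairwise
distinct sets, any narrowing set for it has at least `N - 1` instances, and
`T = Fin (N-1)` itself is a narrowing set (hence minimal). -/
theorem chain_upper_bound_tight (N : ℕ) (hN : 1 ≤ N) :
    Function.Injective (chainFam N) ∧
    (∀ T : Finset (Fin (N - 1)),
      (∀ i j : Fin N, i ≠ j → ∃ x ∈ T, ((x ∈ chainFam N i) ↔ (x ∉ chainFam N j))) →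
      N - 1 ≤ T.card) ∧
    (∀ i j : Fin N, i ≠ j →
      ∃ x ∈ (Finset.univ : Finset (Fin (N - 1))),
        ((x ∈ chainFam N i) ↔ (x ∉ chainFam N j))) := by
  refine ⟨?_, ?_, ?_⟩
  · intro i j h
    by_contra hne
    rcases Ne.lt_or_gt (fun hv => hne (Fin.ext hv) : (i:ℕ) ≠ (j:ℕ)) with hlt | hlt
    · obtain ⟨x, hx⟩ := chain_distinguish N hlt
      rw [h] at hx; tauto
    · obtain ⟨x, hx⟩ := chain_distinguish N hlt
      rw [h] at hx; tauto
  · intro T hT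
    have hTuniv : T = Finset.univ := by
      refine Finset.eq_univ_of_forall fun x => ?_
      have hx1 : (x : ℕ) < N := lt_of_lt_of_le x.isLt (Nat.sub_le N 1)
      have hx2 : (x : ℕ) + 1 < N := Nat.add_lt_of_lt_sub x.isLt
      set i : Fin N := ⟨x, hx1⟩
      set j : Fin N := ⟨x + 1, hx2⟩
      have hij : i ≠ j := by simp [i, j, Fin.ext_iff]
      obtain ⟨y, hyT, hy⟩ := hT i j hij
      have : y = x := by
        simp only [chainFam, Set.mem_setOf_eq, i, j] at hy
        omega
      rwa [← this]
    rw [hTuniv]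
    simp
  · intro i j h
    rcases Ne.lt_or_gt (fun hv => h (Fin.ext hv) : (i:ℕ) ≠ (j:ℕ)) with hlt | hlt
    · obtain ⟨x, hx⟩ := chain_distinguish N hlt
      exact ⟨x, Finset.mem_univ x, by tauto⟩
    · obtain ⟨x, hx⟩ := chain_distinguish N hlt
      exact ⟨x, Finset.mem_univ x, by tauto⟩
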